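/- Let s be a sesquilinear form on a finitely generated right Q-module V and let v ∈ V be such that s(v,v) ∈ K but s(v,v) ∉ k·1. Let d ≥ 1 be an integer, let x₀, …, x_{d−1} ∈ Q, and set ξ = (t^d + x_{d−1}·t^{d−1} + ⋯ + x₁·t + x₀)·ε ∈ 𝓘. If deg a(ξ, s(v,v)·ξ) ≤ 2d − 1, then x_{d−1} ∈ K. -/

import Mathlib

open scoped TensorProduct

open Polynomial in
theorem my_coeff_mul_top {R : Type*} [Semiring R] (p q : R[X]) (m n : ℕ)
    (hp : ∀ i, m < i → p.coeff i = 0) (hq : ∀ i, n < i → q.coeff i = 0) :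
    (p * q).coeff (m + n) = p.coeff m * q.coeff n := by
  rw [Polynomial.coeff_mul, Finset.sum_eq_single ((m, n) : ℕ × ℕ)]
  · rintro ⟨a1, a2⟩ hmem hne
    rw [Finset.HasAntidiagonal.mem_antidiagonal] at hmem
    have hne' : a1 ≠ m ∨ a2 ≠ n := by
      by_contra hc
      push_neg at hc
      exact hne (by rw [hc.1, hc.2])
    rcases lt_or_ge m a1 with h | h
    · rw [hp a1 h, zero_mul]
    · rw [hq a2 (by omega), mul_zero]
  · intro h
    simp at h

open Polynomial in
theorem my_coeff_sum {R ι : Type*} [Semiring R] (s : Finset ι) (a : ι → R) (m : ι → ℕ) (n : ℕ) :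
    (∑ i ∈ s, C (a i) * X ^ (m i)).coeff n = ∑ i ∈ s, if n = m i then a i else 0 := by
  rw [Polynomial.finset_sum_coeff]
  exact Finset.sum_congr rfl fun i _ => by
    rw [coeff_C_mul, coeff_X_pow, mul_ite, mul_one, mul_zero]

/-- `f` is a Laurent polynomial: a finite sum `Σ y_z · t^z` with `y_z ∈ K`. -/
def IsLaurent {K : Type} [Field K] (f : RatFunc K) : Prop :=
  ∃ c : ℤ →₀ K, f = c.sum fun z y => algebraMap K (RatFunc K) y * RatFunc.X ^ z

/-- `f` is a Laurent polynomial of degree at most `n` (degree = max |z| over nonzero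
coefficients; `deg 0 = -∞`). -/
def LaurentDegLE {K : Type} [Field K] (f : RatFunc K) (n : ℕ) : Prop :=
  ∃ c : ℤ →₀ K, (∀ z : ℤ, c z ≠ 0 → |z| ≤ (n : ℤ)) ∧
    f = c.sum fun z y => algebraMap K (RatFunc K) y * RatFunc.X ^ z

/-- The value `a(f·ε, g·ε) = u·(σ(f)·g − f·σ(g))` of the alternating form `a` on `I`,
expressed through the unique representations `f·ε`, `g·ε` of its arguments. -/
noncomputable def aForm {K : Type} [Field K] (σ : RatFunc K ≃+* RatFunc K) (u : K)
    (f g : RatFunc K) : RatFunc K :=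
  algebraMap K (RatFunc K) u * (σ f * g - f * σ g)

theorem subleading_coefficient_in_K
    -- k is a field, K/k a degree-2 Galois extension with nontrivial automorphism ι,
    -- b a nonzero element of k
    (k K : Type) [Field k] [Field K] [Algebra k K]
    (hrank : Module.finrank k K = 2)
    (ι : K ≃ₐ[k] K) (hι : ∃ x : K, ι x ≠ x)
    (hι2 : ∀ x : K, ι (ι x) = x)
    (hfix : ∀ x : K, ι x = x → ∃ c : k, algebraMap k K c = x)
    (b : k) (hb : b ≠ 0)
    -- Q = (K, ι, b) is the crossed-product quaternion k-algebra, a division ring,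
    -- containing K via φ, with j·j = b, j·x = ι(x)·j, and Q = K ⊕ K·j
    (Q : Type) [DivisionRing Q] [Algebra k Q]
    (φ : K →ₐ[k] Q) (j : Q)
    (hj2 : j * j = algebraMap k Q b)
    (hjx : ∀ x : K, j * φ x = φ (ι x) * j)
    (hQdec : ∀ q : Q, ∃! p : K × K, q = φ p.1 + φ p.2 * j)
    -- the canonical involution of Q
    (conj : Q → Q)
    (hconj_add : ∀ a b : Q, conj (a + b) = conj a + conj b)
    (hconj_mul : ∀ a b : Q, conj (a * b) = conj b * conj a)
    (hconj_K : ∀ x : K, conj (φ x) = φ (ι x))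
    (hconj_j : conj j = -j)
    -- σ is the automorphism of K(t) acting as ι on K with σ(t) = b·t⁻¹
    (σ : RatFunc K ≃+* RatFunc K)
    (hσK : ∀ x : K, σ (algebraMap K (RatFunc K) x) = algebraMap K (RatFunc K) (ι x))
    (hσt : σ RatFunc.X = algebraMap K (RatFunc K) (algebraMap k K b) * RatFunc.X⁻¹)
    -- Q_F = Q ⊗_k F, identified with K(t) ⊕ K(t)·j : it contains K(t) via ψ and an
    -- element J (the image of j) with J·J = b, J·ψ(f) = ψ(σ f)·J, Q_F = ψ(K(t)) ⊕ ψ(K(t))·J,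
    -- and Q embeds via φ' compatibly with φ and j
    (QF : Type) [Ring QF]
    (ψ : RatFunc K →+* QF) (J : QF)
    (hJ2 : J * J = ψ (algebraMap K (RatFunc K) (algebraMap k K b)))
    (hJf : ∀ f : RatFunc K, J * ψ f = ψ (σ f) * J)
    (hQFdec : ∀ q : QF, ∃! p : RatFunc K × RatFunc K, q = ψ p.1 + ψ p.2 * J)
    (φ' : Q →+* QF)
    (hφ'K : ∀ x : K, φ' (φ x) = ψ (algebraMap K (RatFunc K) x))
    (hφ'j : φ' j = J)
    -- u is a nonzero element of K with ι(u) = -u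
    (u : K) (hu : u ≠ 0) (hιu : ι u = -u)
    -- V is a finitely generated right Q-module and s a sesquilinear form on V
    (V : Type) [AddCommGroup V] [Module Qᵐᵒᵖ V] [Module.Finite Qᵐᵒᵖ V]
    (s : V → V → Q)
    (hs1 : ∀ v v' w : V, s (v + v') w = s v w + s v' w)
    (hs2 : ∀ v w w' : V, s v (w + w') = s v w + s v w')
    (hsesq : ∀ (v w : V) (x y : Q),
      s (MulOpposite.op x • v) (MulOpposite.op y • w) = conj x * s v w * y)
    -- ε = 1 + j·t⁻¹
    (ε : QF) (hε : ε = 1 + J * ψ RatFunc.X⁻¹)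
    -- s(v,v) ∈ K but s(v,v) ∉ k·1
    (v : V) (hvK : ∃ y : K, s v v = φ y)
    (hvk : ¬ ∃ c : k, s v v = algebraMap k Q c)
    (d : ℕ) (hd : 1 ≤ d) (x : Fin d → Q)
    -- ξ = (t^d + x_{d−1}·t^{d−1} + ⋯ + x₀)·ε ∈ 𝓘, expressed as ξ = f·ε with f ∈ K(t),
    -- and s(v,v)·ξ = g·ε
    (ξ : QF)
    (hξ : ξ = (ψ (RatFunc.X ^ d) + ∑ i : Fin d, φ' (x i) * ψ (RatFunc.X ^ (i : ℕ))) * ε)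
    (f g : RatFunc K) (hf : ξ = ψ f * ε) (hg : φ' (s v v) * ξ = ψ g * ε)
    -- if deg a(ξ, s(v,v)·ξ) ≤ 2d − 1 ...
    (hdeg : LaurentDegLE (aForm σ u f g) (2 * d - 1)) :
    -- ... then x_{d−1} ∈ K
    ∃ y : K, x ⟨d - 1, by omega⟩ = φ y := by
  classical
  obtain ⟨w, hw⟩ := hvK
  obtain ⟨c, hcb, hcs⟩ : ∃ c : ℤ →₀ K, (∀ z : ℤ, c z ≠ 0 → |z| ≤ ((2 * d - 1 : ℕ) : ℤ)) ∧
      aForm σ u f g = c.sum fun z y => algebraMap K (RatFunc K) y * RatFunc.X ^ z := hdeg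
  simp only [aForm] at hcs
  have hX0 : (RatFunc.X : RatFunc K) ≠ 0 := RatFunc.X_ne_zero
  set AM : K →+* RatFunc K := (algebraMap K (RatFunc K) : K →+* RatFunc K) with hAM
  set bb : RatFunc K := AM (algebraMap k K b) with hbb
  have hbb0 : bb ≠ 0 := by
    rw [hbb]
    intro h
    exact hb ((algebraMap k K).injective ((AM.injective (h.trans (map_zero AM).symm)).trans
      (map_zero (algebraMap k K)).symm))
  have hσbb : σ bb = bb := by
    rw [hbb, hσK]
    congr 1
    exact ι.commutes b
  have hσXinv : σ (RatFunc.X⁻¹) = bb⁻¹ * RatFunc.X := by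
    rw [map_inv₀, hσt, mul_inv, inv_inv]
  have hσbX : σ (bb * RatFunc.X⁻¹) = RatFunc.X := by
    rw [map_mul, hσbb, hσXinv, ← mul_assoc, mul_inv_cancel₀ hbb0, one_mul]
  -- decompose the x i
  choose P hYZ using fun i : Fin d => (hQdec (x i)).exists
  -- uniqueness of the representation h ↦ ψ h * ε
  have hψε : ∀ h : RatFunc K, ψ h * ε = ψ h + ψ (h * (bb⁻¹ * RatFunc.X)) * J := by
    intro h
    have h1 : ψ h * J = J * ψ (σ.symm h) := by
      rw [hJf, RingEquiv.apply_symm_apply]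
    have h2 : σ (σ.symm h * RatFunc.X⁻¹) = h * (bb⁻¹ * RatFunc.X) := by
      rw [map_mul, RingEquiv.apply_symm_apply, hσXinv]
    rw [hε, mul_add, mul_one, ← mul_assoc, h1, mul_assoc, ← map_mul, hJf, h2]
  have huniq : ∀ h h' : RatFunc K, ψ h * ε = ψ h' * ε → h = h' := by
    intro h h' he
    obtain ⟨q, hq, hqu⟩ := hQFdec (ψ h * ε)
    have e1 := hqu (h, h * (bb⁻¹ * RatFunc.X)) (hψε h)
    have e2 := hqu (h', h' * (bb⁻¹ * RatFunc.X)) (by rw [he]; exact hψε h')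
    exact congrArg Prod.fst (e1.trans e2.symm)
  -- J * ε = ψ (b t⁻¹) * ε
  have hJε : J * ε = ψ (bb * RatFunc.X⁻¹) * ε := by
    have hXJ : ψ (bb * RatFunc.X⁻¹) * J = J * ψ RatFunc.X := by
      rw [hJf, hσt]
    calc J * ε = J + ψ (bb * RatFunc.X⁻¹) := by
          rw [hε, mul_add, mul_one, ← mul_assoc, hJ2, ← map_mul]
      _ = ψ (bb * RatFunc.X⁻¹) * ε := by
          rw [hε, mul_add, mul_one, ← mul_assoc, hXJ, mul_assoc, ← map_mul,
            mul_inv_cancel₀ hX0, map_one, mul_one, add_comm]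
  -- the product of each coefficient with ε
  have hterm : ∀ i : Fin d, φ' (x i) * ψ (RatFunc.X ^ (i : ℕ)) * ε
      = ψ (AM (P i).1 * RatFunc.X ^ (i : ℕ)
          + AM ((P i).2) * (bb * RatFunc.X⁻¹) ^ ((i : ℕ) + 1)) * ε := by
    intro i
    have h1 : J * ψ (RatFunc.X ^ (i : ℕ)) = ψ ((bb * RatFunc.X⁻¹) ^ (i : ℕ)) * J := by
      rw [hJf, map_pow, hσt]
    rw [hYZ i, map_add, map_mul, hφ'K, hφ'K, hφ'j, map_add, add_mul, add_mul, add_mul]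
    congr 1
    · rw [← map_mul]
    · rw [mul_assoc (ψ (AM ((P i).2))) J, h1, ← mul_assoc, ← map_mul, mul_assoc, hJε,
        ← mul_assoc, ← map_mul, mul_assoc (AM ((P i).2)), ← pow_succ]
  -- the explicit form of f
  set F : RatFunc K := RatFunc.X ^ d + ∑ i : Fin d, (AM (P i).1 * RatFunc.X ^ (i : ℕ)
      + AM ((P i).2) * (bb * RatFunc.X⁻¹) ^ ((i : ℕ) + 1)) with hF
  have hfF : f = F := by
    apply huniq
    rw [← hf, hξ, hF, map_add, map_sum, add_mul, add_mul, Finset.sum_mul, Finset.sum_mul]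
    congr 1
    exact Finset.sum_congr rfl fun i _ => hterm i
  -- the explicit form of g
  have hgF : g = AM w * F := by
    apply huniq
    rw [← hg, hw, hφ'K, hf, hfF, ← mul_assoc, ← map_mul]
  -- w is not fixed by ι
  have hιw : ι w ≠ w := by
    intro hww
    obtain ⟨c', hc'⟩ := hfix w hww
    exact hvk ⟨c', by rw [hw, ← hc', φ.commutes]⟩
  have hc00 : u * (w - ι w) ≠ 0 :=
    mul_ne_zero hu (sub_ne_zero.mpr fun hh => hιw hh.symm)
  -- rewrite the Laurent condition
  have hcs' : AM (u * (w - ι w)) * (σ F * F)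
      = c.sum fun z y => AM y * RatFunc.X ^ z := by
    have hσg : σ (AM w * F) = AM (ι w) * σ F := by rw [map_mul, hσK]
    rw [← hcs, hfF, hgF, hσg, map_mul, map_sub]
    ring
  -- explicit form of σ F
  have hσF : σ F = (bb * RatFunc.X⁻¹) ^ d
      + ∑ i : Fin d, (AM (ι ((P i).1)) * (bb * RatFunc.X⁻¹) ^ (i : ℕ)
        + AM (ι ((P i).2)) * RatFunc.X ^ ((i : ℕ) + 1)) := by
    rw [hF, map_add, map_pow, map_sum, hσt]
    congr 1
    refine Finset.sum_congr rfl fun i _ => ?_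
    rw [map_add, map_mul, map_mul, hσK, hσK, map_pow, map_pow, hσt, hσbX]
  -- power helper
  have hXd : ∀ m : ℕ, m ≤ d → (RatFunc.X : RatFunc K) ^ d * (RatFunc.X⁻¹) ^ m
      = RatFunc.X ^ (d - m) := by
    intro m hm
    have h1 : (RatFunc.X : RatFunc K) ^ d = RatFunc.X ^ (d - m) * RatFunc.X ^ m := by
      rw [← pow_add]
      congr 1
      omega
    rw [h1, mul_assoc, ← mul_pow, mul_inv_cancel₀ hX0, one_pow, mul_one]
  set π : Polynomial K →+* RatFunc K := (algebraMap (Polynomial K) (RatFunc K) : _) with hπ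
  have hπC : ∀ a : K, π (Polynomial.C a) = AM a := fun a => rfl
  have hπX : π Polynomial.X = RatFunc.X := rfl
  set PA : Polynomial K := Polynomial.C ((algebraMap k K b) ^ d)
      + ∑ i : Fin d, (Polynomial.C (ι (P i).1 * (algebraMap k K b) ^ (i : ℕ))
          * Polynomial.X ^ (d - (i : ℕ))
        + Polynomial.C (ι (P i).2) * Polynomial.X ^ (d + (i : ℕ) + 1)) with hPA
  set PB : Polynomial K := Polynomial.X ^ (d + d)
      + ∑ i : Fin d, (Polynomial.C (P i).1 * Polynomial.X ^ (d + (i : ℕ))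
        + Polynomial.C ((P i).2 * (algebraMap k K b) ^ ((i : ℕ) + 1))
          * Polynomial.X ^ (d - (i : ℕ) - 1)) with hPB
  have hA : RatFunc.X ^ d * σ F = π PA := by
    rw [hσF, hPA, map_add, map_sum, mul_add, Finset.mul_sum]
    congr 1
    · rw [mul_pow, mul_left_comm, hXd d le_rfl, Nat.sub_self, pow_zero, mul_one, hπC,
        map_pow, ← hbb]
    · refine Finset.sum_congr rfl fun i _ => ?_
      have hiLt : (i : ℕ) < d := i.isLt
      simp only [map_add, map_mul, map_pow, hπC, hπX, ← hbb]
      rw [← hXd (i : ℕ) (le_of_lt hiLt),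
        show d + (i : ℕ) + 1 = d + ((i : ℕ) + 1) from by omega, pow_add]
      ring
  have hB : RatFunc.X ^ d * F = π PB := by
    rw [hF, hPB, map_add, map_sum, mul_add, Finset.mul_sum]
    congr 1
    · rw [map_pow, hπX, ← pow_add]
    · refine Finset.sum_congr rfl fun i _ => ?_
      have hiLt : (i : ℕ) < d := i.isLt
      simp only [map_add, map_mul, map_pow, hπC, hπX, ← hbb]
      rw [show d - (i : ℕ) - 1 = d - ((i : ℕ) + 1) from by omega,
        ← hXd ((i : ℕ) + 1) (by omega), pow_add]
      ring
  have hmain : π (Polynomial.C (u * (w - ι w)) * PA * PB)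
      = π (c.sum fun z y => Polynomial.C y * Polynomial.X ^ (z + (d + d : ℕ)).toNat) := by
    rw [map_mul, map_mul, hπC, ← hA, ← hB]
    calc AM (u * (w - ι w)) * (RatFunc.X ^ d * σ F) * (RatFunc.X ^ d * F)
        = RatFunc.X ^ (d + d) * (AM (u * (w - ι w)) * (σ F * F)) := by
          rw [pow_add]; ring
      _ = RatFunc.X ^ (d + d) * (c.sum fun z y => AM y * RatFunc.X ^ z) := by rw [hcs']
      _ = π (c.sum fun z y => Polynomial.C y * Polynomial.X ^ (z + (d + d : ℕ)).toNat) := ?_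
    rw [Finsupp.sum, Finsupp.sum, map_sum, Finset.mul_sum]
    refine Finset.sum_congr rfl fun zz hzz => ?_
    have hz1 := hcb zz (Finsupp.mem_support_iff.mp hzz)
    rw [abs_le] at hz1
    have hznn : (0 : ℤ) ≤ zz + (d + d : ℕ) := by omega
    rw [map_mul, map_pow, hπC, hπX, mul_left_comm]
    congr 1
    rw [← zpow_natCast (RatFunc.X : RatFunc K) (d + d), ← zpow_add₀ hX0,
      ← zpow_natCast (RatFunc.X : RatFunc K) ((zz + (d + d : ℕ)).toNat),
      Int.toNat_of_nonneg hznn]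
    congr 1
    omega
  have hpoly : Polynomial.C (u * (w - ι w)) * PA * PB
      = c.sum fun z y => Polynomial.C y * Polynomial.X ^ (z + (d + d : ℕ)).toNat :=
    RatFunc.algebraMap_injective K hmain
  set D1 : Fin d := ⟨d - 1, by omega⟩ with hD1v
  have hD1 : (D1 : ℕ) = d - 1 := rfl
  have hPAhi : ∀ n : ℕ, d + d < n → PA.coeff n = 0 := by
    intro n hn
    rw [hPA, Polynomial.coeff_add, Polynomial.coeff_C, if_neg (by omega), zero_add,
      Polynomial.finset_sum_coeff]
    refine Finset.sum_eq_zero fun i _ => ?_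
    have hiLt : (i : ℕ) < d := i.isLt
    rw [Polynomial.coeff_add, Polynomial.coeff_C_mul, Polynomial.coeff_C_mul,
      Polynomial.coeff_X_pow, Polynomial.coeff_X_pow, if_neg (by omega), if_neg (by omega),
      mul_zero, mul_zero, add_zero]
  have hPBhi : ∀ n : ℕ, d + d < n → PB.coeff n = 0 := by
    intro n hn
    rw [hPB, Polynomial.coeff_add, Polynomial.coeff_X_pow, if_neg (by omega), zero_add,
      Polynomial.finset_sum_coeff]
    refine Finset.sum_eq_zero fun i _ => ?_
    have hiLt : (i : ℕ) < d := i.isLt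
    rw [Polynomial.coeff_add, Polynomial.coeff_C_mul, Polynomial.coeff_C_mul,
      Polynomial.coeff_X_pow, Polynomial.coeff_X_pow, if_neg (by omega), if_neg (by omega),
      mul_zero, mul_zero, add_zero]
  have hPA2d : PA.coeff (d + d) = ι (P D1).2 := by
    rw [hPA, Polynomial.coeff_add, Polynomial.coeff_C, if_neg (by omega), zero_add,
      Polynomial.finset_sum_coeff]
    rw [Finset.sum_eq_single D1]
    · rw [Polynomial.coeff_add, Polynomial.coeff_C_mul, Polynomial.coeff_C_mul,
        Polynomial.coeff_X_pow, Polynomial.coeff_X_pow, hD1,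
        if_neg (by omega), if_pos (by omega), mul_zero, zero_add, mul_one]
    · intro i _ hne
      have hiLt : (i : ℕ) < d := i.isLt
      have hine : (i : ℕ) ≠ d - 1 := fun h => hne (Fin.ext (by rw [h, hD1]))
      rw [Polynomial.coeff_add, Polynomial.coeff_C_mul, Polynomial.coeff_C_mul,
        Polynomial.coeff_X_pow, Polynomial.coeff_X_pow, if_neg (by omega), if_neg (by omega),
        mul_zero, mul_zero, add_zero]
    · intro h
      exact absurd (Finset.mem_univ _) h
  have hPB2d : PB.coeff (d + d) = 1 := by
    rw [hPB, Polynomial.coeff_add, Polynomial.coeff_X_pow, if_pos rfl,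
      Polynomial.finset_sum_coeff]
    have : ∀ i : Fin d, i ∈ (Finset.univ : Finset (Fin d)) →
        ((Polynomial.C (P i).1 * Polynomial.X ^ (d + (i : ℕ))
          + Polynomial.C ((P i).2 * (algebraMap k K b) ^ ((i : ℕ) + 1))
            * Polynomial.X ^ (d - (i : ℕ) - 1)).coeff (d + d)) = 0 := by
      intro i _
      have hiLt : (i : ℕ) < d := i.isLt
      rw [Polynomial.coeff_add, Polynomial.coeff_C_mul, Polynomial.coeff_C_mul,
        Polynomial.coeff_X_pow, Polynomial.coeff_X_pow, if_neg (by omega), if_neg (by omega),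
        mul_zero, mul_zero, add_zero]
    rw [Finset.sum_eq_zero this, add_zero]
  have hfinal : (u * (w - ι w)) * ι ((P D1).2) = 0 := by
    have h1 : (Polynomial.C (u * (w - ι w)) * PA * PB).coeff ((d + d) + (d + d))
        = (u * (w - ι w)) * ι ((P D1).2) := by
      rw [mul_assoc, Polynomial.coeff_C_mul,
        my_coeff_mul_top PA PB (d + d) (d + d) hPAhi hPBhi, hPA2d, hPB2d, mul_one]
    have h2 : ((c.sum fun z y => Polynomial.C y
        * Polynomial.X ^ (z + (d + d : ℕ)).toNat)).coeff ((d + d) + (d + d)) = 0 := by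
      rw [Finsupp.sum, Polynomial.finset_sum_coeff]
      refine Finset.sum_eq_zero fun zz hzz => ?_
      have hz1 := hcb zz (Finsupp.mem_support_iff.mp hzz)
      rw [abs_le] at hz1
      rw [Polynomial.coeff_C_mul, Polynomial.coeff_X_pow, if_neg (by omega), mul_zero]
    rw [← h1, hpoly, h2]
  have hz0 : (P D1).2 = 0 := by
    have h3 : ι ((P D1).2) = 0 := by
      rcases mul_eq_zero.mp hfinal with h | h
      · exact absurd h hc00
      · exact h
    have h4 := congrArg ι h3
    rw [hι2, map_zero] at h4
    exact h4
  refine ⟨(P D1).1, ?_⟩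
  show x D1 = φ (P D1).1
  rw [hYZ D1, hz0, map_zero, zero_mul, add_zero]
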